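/- The exponential generating function of the polynomials I_n is ∑_{n=0}^∞ (t^n/n!)·I_n = exp(α·t² + t·I_1), where I_1 = νw - 2αz - ξ; that is, for every complex t the series converges and equals exp(αt² + t(νw - 2αz - ξ)). -/

import Mathlib

open Complex

noncomputable def Ic (ν α ξ z w : ℂ) : ℕ → ℂ
  | 0 => 1
  | 1 => ν * w - 2 * α * z - ξ
  | (n + 2) => (ν * w - 2 * α * z - ξ) * Ic ν α ξ z w (n + 1)
      + 2 * α * (n + 1) * Ic ν α ξ z w n

namespace StmtAux

open Finset

/-- The index set `{(j,m) : 2j + m = n}` as a finset. -/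
def A (n : ℕ) : Finset (ℕ × ℕ) :=
  (range (n + 1) ×ˢ range (n + 1)).filter (fun p => 2 * p.1 + p.2 = n)

lemma mem_A {n : ℕ} {p : ℕ × ℕ} : p ∈ A n ↔ 2 * p.1 + p.2 = n := by
  constructor
  · intro h; exact (mem_filter.mp h).2
  · intro h
    refine mem_filter.mpr ⟨mem_product.mpr ⟨mem_range.mpr ?_, mem_range.mpr ?_⟩, h⟩
    · omega
    · omega

/-- The explicit polynomial. -/
noncomputable def S (α b : ℂ) (n : ℕ) : ℂ :=
  ∑ p ∈ A n, (n.factorial : ℂ) * α ^ p.1 * b ^ p.2 / ((p.1.factorial : ℂ) * (p.2.factorial : ℂ))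

lemma A_zero : A 0 = {(0, 0)} := by decide
lemma A_one : A 1 = {(0, 1)} := by decide

lemma S_zero (α b : ℂ) : S α b 0 = 1 := by
  simp [S, A_zero]

lemma S_one (α b : ℂ) : S α b 1 = b := by
  simp [S, A_one]

lemma factorial_ne_zero' (n : ℕ) : (n.factorial : ℂ) ≠ 0 := by
  exact_mod_cast n.factorial_ne_zero

lemma S_rec (α b : ℂ) (n : ℕ) :
    S α b (n + 2) = b * S α b (n + 1) + 2 * α * (n + 1) * S α b n := by
  classical
  have key : ∀ p ∈ A (n + 2),
      ((n + 2).factorial : ℂ) * α ^ p.1 * b ^ p.2 / ((p.1.factorial : ℂ) * (p.2.factorial : ℂ))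
      = (p.2 : ℂ) * (((n + 1).factorial : ℂ) * α ^ p.1 * b ^ p.2 /
          ((p.1.factorial : ℂ) * (p.2.factorial : ℂ)))
        + 2 * (p.1 : ℂ) * (((n + 1).factorial : ℂ) * α ^ p.1 * b ^ p.2 /
          ((p.1.factorial : ℂ) * (p.2.factorial : ℂ))) := by
    intro p hp
    have h : 2 * p.1 + p.2 = n + 2 := mem_A.mp hp
    have hfac : ((n + 2).factorial : ℂ) = ((n : ℂ) + 2) * ((n + 1).factorial : ℂ) := by
      rw [show n + 2 = (n + 1) + 1 from rfl, Nat.factorial_succ]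
      push_cast; ring
    have h' : n + 2 = p.2 + 2 * p.1 := by omega
    have hn2 : ((n : ℂ) + 2) = (p.2 : ℂ) + 2 * (p.1 : ℂ) := by
      exact_mod_cast congrArg (fun k : ℕ => (k : ℂ)) h'
    rw [hfac, hn2]
    ring
  have hsplit : S α b (n + 2)
      = (∑ p ∈ A (n + 2), (p.2 : ℂ) * (((n + 1).factorial : ℂ) * α ^ p.1 * b ^ p.2 /
          ((p.1.factorial : ℂ) * (p.2.factorial : ℂ))))
        + (∑ p ∈ A (n + 2), 2 * (p.1 : ℂ) * (((n + 1).factorial : ℂ) * α ^ p.1 * b ^ p.2 /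
          ((p.1.factorial : ℂ) * (p.2.factorial : ℂ)))) := by
    rw [S, ← Finset.sum_add_distrib]
    exact Finset.sum_congr rfl key
  -- first sum equals b * S α b (n+1)
  have h1 : (∑ p ∈ A (n + 2), (p.2 : ℂ) * (((n + 1).factorial : ℂ) * α ^ p.1 * b ^ p.2 /
          ((p.1.factorial : ℂ) * (p.2.factorial : ℂ))))
      = b * S α b (n + 1) := by
    rw [S, Finset.mul_sum]
    rw [← Finset.sum_filter_of_ne (p := fun p : ℕ × ℕ => 0 < p.2)
      (by intro p _ hne; by_contra hc; simp only [not_lt, Nat.le_zero] at hc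
          apply hne; rw [hc]; simp)]
    refine Finset.sum_nbij' (i := fun p => (p.1, p.2 - 1)) (j := fun q => (q.1, q.2 + 1))
      ?_ ?_ ?_ ?_ ?_
    · intro p hp
      have h2 := mem_A.mp (Finset.mem_filter.mp hp).1
      have h3 := (Finset.mem_filter.mp hp).2
      simp only [mem_A]
      omega
    · intro q hq
      have h2 := mem_A.mp hq
      refine Finset.mem_filter.mpr ⟨?_, by simp⟩
      simp only [mem_A]
      omega
    · intro p hp
      have h3 := (Finset.mem_filter.mp hp).2
      simp only at h3 ⊢
      ext <;> simp <;> omega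
    · intro q _; rfl
    · intro p hp
      have h3 := (Finset.mem_filter.mp hp).2
      obtain ⟨j, m⟩ := p
      simp only at h3 ⊢
      obtain ⟨m', rfl⟩ : ∃ m', m = m' + 1 := ⟨m - 1, by omega⟩
      simp only [Nat.add_sub_cancel]
      have hm : ((m' + 1).factorial : ℂ) = ((m' : ℂ) + 1) * (m'.factorial : ℂ) := by
        rw [Nat.factorial_succ]; push_cast; ring
      rw [hm]
      have hm1 : ((m' : ℂ) + 1) ≠ 0 := Nat.cast_add_one_ne_zero m'
      have hj' := factorial_ne_zero' j
      have hm' := factorial_ne_zero' m'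
      field_simp
      push_cast
      ring
  have h2 : (∑ p ∈ A (n + 2), 2 * (p.1 : ℂ) * (((n + 1).factorial : ℂ) * α ^ p.1 * b ^ p.2 /
          ((p.1.factorial : ℂ) * (p.2.factorial : ℂ))))
      = 2 * α * (n + 1) * S α b n := by
    rw [S, Finset.mul_sum]
    rw [← Finset.sum_filter_of_ne (p := fun p : ℕ × ℕ => 0 < p.1)
      (by intro p _ hne; by_contra hc; simp only [not_lt, Nat.le_zero] at hc
          apply hne; rw [hc]; simp)]
    refine Finset.sum_nbij' (i := fun p => (p.1 - 1, p.2)) (j := fun q => (q.1 + 1, q.2))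
      ?_ ?_ ?_ ?_ ?_
    · intro p hp
      have h2 := mem_A.mp (Finset.mem_filter.mp hp).1
      have h3 := (Finset.mem_filter.mp hp).2
      simp only [mem_A]
      omega
    · intro q hq
      have h2 := mem_A.mp hq
      refine Finset.mem_filter.mpr ⟨?_, by simp⟩
      simp only [mem_A]
      omega
    · intro p hp
      have h3 := (Finset.mem_filter.mp hp).2
      simp only at h3 ⊢
      ext <;> simp <;> omega
    · intro q _; rfl
    · intro p hp
      have h3 := (Finset.mem_filter.mp hp).2
      obtain ⟨j, m⟩ := p
      simp only at h3 ⊢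
      obtain ⟨j', rfl⟩ : ∃ j', j = j' + 1 := ⟨j - 1, by omega⟩
      simp only [Nat.add_sub_cancel]
      have hj : ((j' + 1).factorial : ℂ) = ((j' : ℂ) + 1) * (j'.factorial : ℂ) := by
        rw [Nat.factorial_succ]; push_cast; ring
      have hnfac : ((n + 1).factorial : ℂ) = ((n : ℂ) + 1) * (n.factorial : ℂ) := by
        rw [Nat.factorial_succ]; push_cast; ring
      rw [hj, hnfac]
      have hj1 : ((j' : ℂ) + 1) ≠ 0 := Nat.cast_add_one_ne_zero j'
      have hj' := factorial_ne_zero' j'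
      have hm' := factorial_ne_zero' m
      field_simp
      push_cast
      ring
  rw [hsplit, h1, h2]

lemma Ic_eq_S (ν α ξ z w : ℂ) (n : ℕ) :
    Ic ν α ξ z w n = S α (ν * w - 2 * α * z - ξ) n := by
  induction n using Nat.twoStepInduction with
  | zero => rw [Ic, S_zero]
  | one => rw [Ic, S_one]
  | more n ih1 ih2 =>
    rw [Ic, S_rec, ih1, ih2]

end StmtAux

theorem stmt4 (ν α ξ z w t : ℂ) :
    HasSum (fun n : ℕ => t ^ n / (n.factorial : ℂ) * Ic ν α ξ z w n)
      (Complex.exp (α * t ^ 2 + t * (ν * w - 2 * α * z - ξ))) := by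
  classical
  have hexp1 : HasSum (fun n : ℕ => (α * t ^ 2) ^ n / (n.factorial : ℂ))
      (Complex.exp (α * t ^ 2)) := by
    rw [Complex.exp_eq_exp_ℂ]
    exact NormedSpace.expSeries_div_hasSum_exp (α * t ^ 2)
  have hexp2 : HasSum (fun n : ℕ => (t * (ν * w - 2 * α * z - ξ)) ^ n / (n.factorial : ℂ))
      (Complex.exp (t * (ν * w - 2 * α * z - ξ))) := by
    rw [Complex.exp_eq_exp_ℂ]
    exact NormedSpace.expSeries_div_hasSum_exp (t * (ν * w - 2 * α * z - ξ))
  have hnorm : ∀ x : ℂ, Summable fun n : ℕ => ‖x ^ n / (n.factorial : ℂ)‖ := by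
    intro x
    have := Real.summable_pow_div_factorial ‖x‖
    refine this.congr fun n => ?_
    rw [norm_div, norm_pow, Complex.norm_natCast]
  have hsummable : Summable (fun p : ℕ × ℕ =>
      ((α * t ^ 2) ^ p.1 / (p.1.factorial : ℂ)) *
        ((t * (ν * w - 2 * α * z - ξ)) ^ p.2 / (p.2.factorial : ℂ))) :=
    summable_mul_of_summable_norm (R := ℂ)
      (f := fun n : ℕ => (α * t ^ 2) ^ n / (n.factorial : ℂ))
      (g := fun n : ℕ => (t * (ν * w - 2 * α * z - ξ)) ^ n / (n.factorial : ℂ))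
      (hnorm _) (hnorm _)
  have hFsum := hexp1.mul hexp2 hsummable
  rw [Complex.exp_add]
  have hfib := hFsum.tsum_fiberwise (fun p : ℕ × ℕ => 2 * p.1 + p.2)
  refine hfib.congr_fun fun n => ?_
  have hset : (fun p : ℕ × ℕ => 2 * p.1 + p.2) ⁻¹' {n} = (StmtAux.A n : Set (ℕ × ℕ)) := by
    ext p
    simp [StmtAux.mem_A]
  rw [hset]
  rw [Finset.tsum_subtype' (StmtAux.A n) (fun p : ℕ × ℕ =>
    (α * t ^ 2) ^ p.1 / (p.1.factorial : ℂ) *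
      ((t * (ν * w - 2 * α * z - ξ)) ^ p.2 / (p.2.factorial : ℂ)))]
  rw [StmtAux.Ic_eq_S, StmtAux.S, Finset.mul_sum]
  refine Finset.sum_congr rfl fun p hp => ?_
  have h : 2 * p.1 + p.2 = n := StmtAux.mem_A.mp hp
  have hT : t ^ n = (t ^ 2) ^ p.1 * t ^ p.2 := by
    rw [← pow_mul, ← pow_add, ← h]
  rw [mul_pow, mul_pow, hT]
  have h1 := StmtAux.factorial_ne_zero' p.1
  have h2 := StmtAux.factorial_ne_zero' p.2
  have h3 := StmtAux.factorial_ne_zero' n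
  field_simp
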